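/- For all nonnegative integers x and y with x < y, one has S_{6,3}([2x, 2y)) = S_{3,0}([2x, 2y)) − S_{3,0}([x, y)), and S_{6,2}([2x, 2y)) = −S_{6,3}([2x, 2y)). -/

import Mathlib

/-- binary digit sum -/
def sigma2 (n : ℕ) : ℕ := (Nat.digits 2 n).sum

/-- `S m l x = Σ_{0 ≤ n < x, n ≡ l (mod m)} (−1)^{σ(n)}` -/
def S (m l x : ℕ) : ℤ :=
  ∑ n ∈ (Finset.range x).filter (fun n => n % m = l), (-1 : ℤ) ^ sigma2 n

/-- `Sint m l x y = S_{m,l}([x,y)) = S_{m,l}(y) − S_{m,l}(x)` -/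
def Sint (m l x y : ℕ) : ℤ := S m l y - S m l x

lemma sigma2_two_mul (k : ℕ) : sigma2 (2 * k) = sigma2 k := by
  rcases Nat.eq_zero_or_pos k with h | h
  · simp [h]
  · unfold sigma2
    rw [Nat.digits_def' (by norm_num) (by omega)]
    simp [Nat.mul_div_cancel_left _ (by norm_num : 0 < 2), Nat.mul_mod_right]

lemma sigma2_two_mul_add_one (k : ℕ) : sigma2 (2 * k + 1) = sigma2 k + 1 := by
  unfold sigma2
  rw [Nat.digits_def' (by norm_num) (by omega)]
  have h1 : (2 * k + 1) % 2 = 1 := by omega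
  have h2 : (2 * k + 1) / 2 = k := by omega
  rw [h1, h2]
  simp [add_comm]

lemma S_succ (m l x : ℕ) :
    S m l (x + 1) = S m l x + if x % m = l then (-1 : ℤ) ^ sigma2 x else 0 := by
  unfold S
  rw [Finset.range_add_one, Finset.filter_insert]
  split
  · rw [Finset.sum_insert (by simp)]; ring
  · simp

lemma key (z : ℕ) :
    S 6 3 (2 * z) = -S 3 1 z ∧ S 6 2 (2 * z) = S 3 1 z ∧
      S 3 0 (2 * z) = S 3 0 z - S 3 1 z := by
  induction z with
  | zero => simp [S]
  | succ k ih =>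
    obtain ⟨i1, i2, i3⟩ := ih
    have h2 : 2 * (k + 1) = (2 * k) + 1 + 1 := by ring
    rw [h2]
    simp only [S_succ, sigma2_two_mul, sigma2_two_mul_add_one, i1, i2, i3, pow_succ]
    have h3 : k % 3 = 0 ∨ k % 3 = 1 ∨ k % 3 = 2 := by omega
    rcases h3 with h | h | h
    · rw [show (2*k) % 6 = 0 from by omega, show (2*k+1) % 6 = 1 from by omega,
        show (2*k) % 3 = 0 from by omega, show (2*k+1) % 3 = 1 from by omega, h]
      norm_num
      try (and_intros <;> ring)
    · rw [show (2*k) % 6 = 2 from by omega, show (2*k+1) % 6 = 3 from by omega,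
        show (2*k) % 3 = 2 from by omega, show (2*k+1) % 3 = 0 from by omega, h]
      norm_num
      try (and_intros <;> ring)
    · rw [show (2*k) % 6 = 4 from by omega, show (2*k+1) % 6 = 5 from by omega,
        show (2*k) % 3 = 1 from by omega, show (2*k+1) % 3 = 2 from by omega, h]
      norm_num
      try (and_intros <;> ring)

theorem stmt_8 (x y : ℕ) (hxy : x < y) :
    Sint 6 3 (2 * x) (2 * y) = Sint 3 0 (2 * x) (2 * y) - Sint 3 0 x y ∧
    Sint 6 2 (2 * x) (2 * y) = -Sint 6 3 (2 * x) (2 * y) := by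
  obtain ⟨a1, a2, a3⟩ := key x
  obtain ⟨b1, b2, b3⟩ := key y
  unfold Sint
  rw [a1, a2, a3, b1, b2, b3]
  constructor <;> ring
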